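/- If a class 𝔽 of R-modules is closed under set-indexed direct sums and under pure quotient modules, then 𝔽 is closed under colimits indexed by partially ordered (directed) sets. In particular, for any directed system {F_i} in 𝔽, the colimit colim F_i lies in 𝔽. -/

import Mathlib

universe u

open TensorProduct CategoryTheory DirectSum

noncomputable section

/-- The submodule of relations presenting the tensor product `Q ⊗_R M` as a quotient of
`Q ⊗_ℤ M`, for a right `R`-module `Q` and a left `R`-module `M`. -/
def tensorRelations (R : Type u) [Ring R] (Q : Type u) [AddCommGroup Q] [Module Rᵐᵒᵖ Q]
    (M : Type u) [AddCommGroup M] [Module R M] : Submodule ℤ (TensorProduct ℤ Q M) :=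
  Submodule.span ℤ
    {x | ∃ (q : Q) (r : R) (m : M), x = (MulOpposite.op r • q) ⊗ₜ[ℤ] m - q ⊗ₜ[ℤ] (r • m)}

/-- The map `Q ⊗_R M → Q ⊗_R N` induced by `f` is injective, where `Q ⊗_R -` is realized
as the quotient of `Q ⊗_ℤ -` by `tensorRelations`. -/
def StaysInjective (R : Type u) [Ring R] (Q : Type u) [AddCommGroup Q] [Module Rᵐᵒᵖ Q]
    {M N : Type u} [AddCommGroup M] [Module R M] [AddCommGroup N] [Module R N]
    (f : M →ₗ[R] N) : Prop :=
  ∀ z : TensorProduct ℤ Q M,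
    LinearMap.lTensor Q f.toAddMonoidHom.toIntLinearMap z ∈ tensorRelations R Q N →
      z ∈ tensorRelations R Q M

/-- `f` is a pure monomorphism of left `R`-modules: it is injective and stays injective
after tensoring with every right `R`-module. -/
def IsPureMono (R : Type u) [Ring R] {M N : Type u} [AddCommGroup M] [Module R M]
    [AddCommGroup N] [Module R N] (f : M →ₗ[R] N) : Prop :=
  Function.Injective f ∧
    ∀ (Q : Type u) [AddCommGroup Q] [Module Rᵐᵒᵖ Q], StaysInjective R Q f

/-- `N` is a pure submodule of `M`. -/
def IsPureSubmodule (R : Type u) [Ring R] {M : Type u} [AddCommGroup M] [Module R M]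
    (N : Submodule R M) : Prop :=
  IsPureMono R N.subtype

/-- `0 → M' → M → M'' → 0` is a pure exact sequence of left `R`-modules. -/
def IsPureExactSeq (R : Type u) [Ring R] {M' M M'' : Type u}
    [AddCommGroup M'] [Module R M'] [AddCommGroup M] [Module R M]
    [AddCommGroup M''] [Module R M'']
    (f : M' →ₗ[R] M) (g : M →ₗ[R] M'') : Prop :=
  Function.Surjective g ∧ Function.Exact f g ∧ IsPureMono R f

/-- A class of left `R`-modules is closed under set-indexed direct sums. -/
def ClosedUnderDirectSums (R : Type u) [Ring R] (𝓕 : Set (ModuleCat.{u} R)) : Prop :=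
  ∀ (ι : Type u) (M : ι → ModuleCat.{u} R), (∀ i, M i ∈ 𝓕) →
    ModuleCat.of R (⨁ i, ↥(M i)) ∈ 𝓕

/-- A class of left `R`-modules is closed under pure quotient modules. -/
def ClosedUnderPureQuotients (R : Type u) [Ring R] (𝓕 : Set (ModuleCat.{u} R)) : Prop :=
  ∀ (M N : ModuleCat.{u} R) (g : M ⟶ N), Function.Surjective g →
    IsPureSubmodule R (LinearMap.ker (g.hom : M →ₗ[R] N)) → M ∈ 𝓕 → N ∈ 𝓕

/-- If a class of left `R`-modules is closed under set-indexed direct sums and under pure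
quotient modules, then it is closed under colimits indexed by directed partially ordered
sets: for any directed system `{G i}` in the class, the colimit lies in the class. -/
lemma aux_congr {R : Type u} [Ring R] {ι : Type u} [DecidableEq ι] {G : ι → Type u}
    [∀ i, AddCommGroup (G i)] [∀ i, Module R (G i)] {P : Type u} [AddCommGroup P] [Module R P]
    (φ ψ : (⨁ i, G i) →ₗ[R] P) (pred : ι → Prop)
    (hfg : ∀ i, pred i → ∀ a, φ (DirectSum.lof R ι G i a) = ψ (DirectSum.lof R ι G i a))
    (x : ⨁ i, G i) (hx : ∀ i, x i ≠ 0 → pred i) : φ x = ψ x := by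
  classical
  revert hx
  induction x using DFinsupp.induction with
  | h0 => intro _; simp
  | ha i b x h1 h2 ih =>
    intro hx
    have hxi : ∀ i', x i' ≠ 0 → pred i' := by
      intro i' h'
      apply hx
      rcases eq_or_ne i' i with rfl | hne
      · exact absurd h1 h'
      · simpa [DFinsupp.add_apply, DFinsupp.single_apply, Ne.symm hne] using h'
    have hpi : pred i := hx i (by simp [DFinsupp.add_apply, h1, h2])
    have hsingle : DFinsupp.single i b = DirectSum.lof R ι G i b := rfl
    rw [hsingle, map_add, map_add, hfg i hpi, ih hxi]

theorem stmt3 (R : Type u) [Ring R] (𝓕 : Set (ModuleCat.{u} R))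
    (hsum : ClosedUnderDirectSums R 𝓕) (hpq : ClosedUnderPureQuotients R 𝓕)
    (ι : Type u) [PartialOrder ι] [IsDirected ι (· ≤ ·)] [DecidableEq ι]
    (G : ι → Type u) [∀ i, AddCommGroup (G i)] [∀ i, Module R (G i)]
    (f : ∀ i j, i ≤ j → G i →ₗ[R] G j) [DirectedSystem G fun i j h => f i j h]
    (hG : ∀ i, ModuleCat.of R (G i) ∈ 𝓕) :
    ModuleCat.of R (Module.DirectLimit G f) ∈ 𝓕 := by
  classical
  let π : (⨁ i, G i) →ₗ[R] Module.DirectLimit G f :=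
    DirectSum.toModule R ι _ (fun i => Module.DirectLimit.of R ι G f i)
  have hπ : Function.Surjective π := by
    rcases isEmpty_or_nonempty ι with h | h
    · intro y; exact ⟨0, Subsingleton.elim _ _⟩
    · intro y
      obtain ⟨i, x, rfl⟩ := Module.DirectLimit.exists_of y
      exact ⟨DirectSum.lof R ι G i x, DirectSum.toModule_lof R i x⟩
  have hker : IsPureSubmodule R (LinearMap.ker π) := by
    refine ⟨Submodule.injective_subtype _, ?_⟩
    intro Q _ _
    set K := LinearMap.ker π with hKdef
    intro z hz
    -- the easy degenerate case
    rcases isEmpty_or_nonempty ι with hemp | hne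
    · have hK : ∀ kk : K, kk = 0 := fun kk =>
        Subtype.ext (DFinsupp.ext fun i => hemp.elim i)
      have hid : (LinearMap.id : K →ₗ[ℤ] K) = 0 := LinearMap.ext fun kk => by
        rw [hK kk]; simp
      have hz0 : z = 0 := by
        calc z = LinearMap.lTensor Q (LinearMap.id : K →ₗ[ℤ] K) z := by
                rw [LinearMap.lTensor_id]; rfl
          _ = 0 := by rw [hid, LinearMap.lTensor_zero]; rfl
      rw [hz0]; exact zero_mem _
    -- write z as a finite sum of simple tensors
    obtain ⟨s, hs⟩ := TensorProduct.exists_finset z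
    -- bound the supports
    obtain ⟨j, hj⟩ := (s.sup fun p => DFinsupp.support (p.2 : ⨁ i, G i)).exists_le
    have hsupp : ∀ p ∈ s, ∀ i, ((p.2 : ⨁ i, G i)) i ≠ 0 → i ≤ j := by
      intro p hp i hi
      exact hj i (Finset.mem_sup.mpr ⟨p, hp, DFinsupp.mem_support_iff.mpr hi⟩)
    -- the partial projections
    let proj : ∀ m : ι, (⨁ i, G i) →ₗ[R] G m := fun m =>
      DirectSum.toModule R ι (G m) fun i => if h : i ≤ m then f i m h else 0
    -- `of j ∘ proj j` agrees with `π` on elements supported below `j`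
    have hprojπ : ∀ p ∈ s, Module.DirectLimit.of R ι G f j (proj j (p.2 : ⨁ i, G i)) = 0 := by
      intro p hp
      have := aux_congr ((Module.DirectLimit.of R ι G f j).comp (proj j)) π (fun i => i ≤ j)
        (fun i hi a => by
          simp only [LinearMap.comp_apply, proj, DirectSum.toModule_lof, dif_pos hi, π,
            Module.DirectLimit.of_f])
        (p.2 : ⨁ i, G i) (hsupp p hp)
      simpa [LinearMap.comp_apply] using this.trans (LinearMap.mem_ker.mp p.2.2)
    -- kill the projections higher up
    have hch : ∀ p : {p // p ∈ s}, ∃ k', ∃ h : j ≤ k',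
        f j k' h (proj j ((p : Q × K).2 : ⨁ i, G i)) = 0 := fun p =>
      Module.DirectLimit.of.zero_exact (hprojπ p p.2)
    choose c hc1 hc2 using hch
    obtain ⟨k₀, hk₀⟩ := (Finset.univ.image c).exists_le
    obtain ⟨k, hjk, hk₀k⟩ := exists_ge_ge j k₀
    have hck : ∀ p : {p // p ∈ s}, c p ≤ k := fun p =>
      le_trans (hk₀ (c p) (Finset.mem_image_of_mem c (Finset.mem_univ p))) hk₀k
    have hprojk : ∀ p : {p // p ∈ s}, proj k ((p : Q × K).2 : ⨁ i, G i) = 0 := by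
      intro p
      have h1 : proj k ((p : Q × K).2 : ⨁ i, G i)
          = f j k hjk (proj j ((p : Q × K).2 : ⨁ i, G i)) := by
        refine aux_congr (proj k) ((f j k hjk).comp (proj j)) (fun i => i ≤ j)
          (fun i hi a => ?_) _ (hsupp _ p.2)
        simp only [LinearMap.comp_apply, proj, DirectSum.toModule_lof, dif_pos hi,
          dif_pos (le_trans hi hjk)]
        rw [Module.DirectedSystem.map_map]
      rw [h1, ← Module.DirectedSystem.map_map f (hc1 p) (hck p), hc2 p, map_zero]
    -- the retraction `ρ : ⨁ G i → K`
    have hmem : ∀ (i : ι) (h : i ≤ k) (a : G i),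
        DirectSum.lof R ι G i a - DirectSum.lof R ι G k (f i k h a) ∈ K := by
      intro i h a
      simp only [hKdef, LinearMap.mem_ker, map_sub, π, DirectSum.toModule_lof,
        Module.DirectLimit.of_f, sub_self]
    let gmap : ∀ i, G i →ₗ[R] K := fun i =>
      if h : i ≤ k then
        LinearMap.codRestrict K
          (DirectSum.lof R ι G i - (DirectSum.lof R ι G k).comp (f i k h))
          (fun a => hmem i h a)
      else 0
    let ρ : (⨁ i, G i) →ₗ[R] K := DirectSum.toModule R ι _ gmap
    -- `ρ` restricts to the identity on the elements appearing in `z`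
    have hρ : ∀ p : {p // p ∈ s}, ρ ((p : Q × K).2 : ⨁ i, G i) = (p : Q × K).2 := by
      intro p
      apply Subtype.ext
      have h1 := aux_congr (K.subtype.comp ρ)
          (LinearMap.id - (DirectSum.lof R ι G k).comp (proj k)) (fun i => i ≤ k)
          (fun i hi a => by
            simp only [LinearMap.comp_apply, ρ, DirectSum.toModule_lof, gmap, dif_pos hi,
              LinearMap.sub_apply, LinearMap.id_apply, proj]
            rfl)
          ((p : Q × K).2 : ⨁ i, G i) (fun i hi => le_trans (hsupp _ p.2 i hi) hjk)
      simp only [LinearMap.comp_apply, LinearMap.sub_apply, LinearMap.id_apply,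
        Submodule.subtype_apply, hprojk p, map_zero, sub_zero] at h1
      exact h1
    -- conclude
    let Φ := LinearMap.lTensor Q (ρ.toAddMonoidHom.toIntLinearMap)
    have key : Φ (LinearMap.lTensor Q K.subtype.toAddMonoidHom.toIntLinearMap z) = z := by
      rw [hs, map_sum, map_sum]
      refine Finset.sum_congr rfl fun p hp => ?_
      simp only [LinearMap.lTensor_tmul, Φ]
      congr 1
      exact hρ ⟨p, hp⟩
    have himg : Φ (LinearMap.lTensor Q K.subtype.toAddMonoidHom.toIntLinearMap z)
        ∈ tensorRelations R Q K := by
      have h2 := Submodule.mem_map_of_mem (f := Φ)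
        (p := Submodule.span ℤ {x : TensorProduct ℤ Q (⨁ i, G i) | ∃ (q : Q) (r : R)
          (m : ⨁ i, G i), x = (MulOpposite.op r • q) ⊗ₜ[ℤ] m - q ⊗ₜ[ℤ] (r • m)}) hz
      rw [Submodule.map_span] at h2
      refine Submodule.span_le.mpr ?_ h2
      rintro _ ⟨x, ⟨q, r, m, rfl⟩, rfl⟩
      apply Submodule.subset_span
      refine ⟨q, r, ρ m, ?_⟩
      simp only [map_sub, LinearMap.lTensor_tmul, Φ]
      congr 2
      exact (ρ.map_smul r m)
    rw [← key]; exact himg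
  exact hpq (ModuleCat.of R (⨁ i, G i)) (ModuleCat.of R (Module.DirectLimit G f)) (ModuleCat.ofHom π) hπ hker
    (hsum ι (fun i => ModuleCat.of R (G i)) hG)

end
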